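/- Let F(t) = Π_{i≥1} (1 − t^{d_i})^{-1} be the generating function of a graded polynomial algebra with generators in degrees d_i, where d_i ≥ c^{-1}·p^i. Then the radius of convergence of F is 1, and the coefficients a_n of F satisfy: for every ε > 0, a_n ≤ exp((1/(2 log p) + ε)(log n)^2) for all sufficiently large n. -/

import Mathlib

/-- The coefficient `a n` of the generating function `F(t) = ∏ᵢ (1 - t^{dᵢ})⁻¹`, i.e. the
number of monomials of total degree `n` in the polynomial algebra with one generator of
degree `d i` for each `i`. -/
noncomputable def genCoeff (d : ℕ → ℕ) (n : ℕ) : ℕ :=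
  Nat.card {a : ℕ →₀ ℕ // (a.sum fun i m => m * d i) = n}


open Finset Real

lemma term_le (d : ℕ → ℕ) {n : ℕ} {a : ℕ →₀ ℕ}
    (h : (a.sum fun i m => m * d i) = n) (i : ℕ) : a i * d i ≤ n := by
  by_cases hi : i ∈ a.support
  · rw [← h, Finsupp.sum]
    exact Finset.single_le_sum (f := fun j => a j * d j) (fun j _ => Nat.zero_le _) hi
  · simp [Finsupp.notMem_support_iff.1 hi]

lemma inj_aux (d : ℕ → ℕ) (hpos : ∀ i, 1 ≤ d i) (hmono : Monotone d) {n K : ℕ}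
    (hK : n < d K) :
    ∃ f : {a : ℕ →₀ ℕ // (a.sum fun i m => m * d i) = n} → (∀ i : Fin K, Fin (n / d i + 1)),
      Function.Injective f := by
  refine ⟨fun a i => ⟨a.1 i, ?_⟩, ?_⟩
  · have h1 : a.1 i * d i ≤ n := term_le d a.2 i
    have h2 : a.1 i ≤ n / d i := (Nat.le_div_iff_mul_le (hpos i)).2 h1
    omega
  · intro a b hab
    have key : ∀ i, a.1 i = b.1 i := by
      intro i
      rcases lt_or_ge i K with hi | hi
      · have := congrFun hab ⟨i, hi⟩
        simpa using this
      · have h2 : d K ≤ d i := hmono hi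
        have ha : a.1 i = 0 := by
          have h1 : a.1 i * d i ≤ n := term_le d a.2 i
          by_contra h
          have : d i ≤ a.1 i * d i := Nat.le_mul_of_pos_left _ (Nat.pos_of_ne_zero h)
          omega
        have hb : b.1 i = 0 := by
          have h1 : b.1 i * d i ≤ n := term_le d b.2 i
          by_contra h
          have : d i ≤ b.1 i * d i := Nat.le_mul_of_pos_left _ (Nat.pos_of_ne_zero h)
          omega
        rw [ha, hb]
    exact Subtype.ext (Finsupp.ext key)

lemma exists_big (p : ℕ) (hp : p.Prime) (c : ℝ) (hc : 1 ≤ c) (d : ℕ → ℕ)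
    (hd : ∀ i : ℕ, ((p : ℝ) ^ (i + 1)) / c ≤ (d i : ℝ)) (n : ℕ) : ∃ K, n < d K := by
  obtain ⟨m, hm⟩ := pow_unbounded_of_one_lt (c * n : ℝ) (by norm_num : (1:ℝ) < 2)
  refine ⟨m, ?_⟩
  have hp2 : (2:ℝ) ≤ p := by exact_mod_cast hp.two_le
  have h1 : (2:ℝ)^m ≤ (p:ℝ)^(m+1) := by
    calc (2:ℝ)^m ≤ (2:ℝ)^(m+1) := by
          apply pow_le_pow_right₀ (by norm_num) (Nat.le_succ m)
    _ ≤ (p:ℝ)^(m+1) := by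
          apply pow_le_pow_left₀ (by norm_num) hp2
  have hc0 : (0:ℝ) < c := lt_of_lt_of_le one_pos hc
  have h3 : (p:ℝ)^(m+1) ≤ (d m) * c := (div_le_iff₀ hc0).1 (hd m)
  have h2 : c * n < (p:ℝ)^(m+1) := lt_of_lt_of_le hm h1
  have : (n:ℝ) < (d m : ℝ) := by nlinarith
  exact_mod_cast this

lemma sol_finite (p : ℕ) (hp : p.Prime) (c : ℝ) (hc : 1 ≤ c) (d : ℕ → ℕ)
    (hpos : ∀ i, 1 ≤ d i) (hmono : Monotone d)
    (hd : ∀ i : ℕ, ((p : ℝ) ^ (i + 1)) / c ≤ (d i : ℝ)) (n : ℕ) :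
    Finite {a : ℕ →₀ ℕ // (a.sum fun i m => m * d i) = n} := by
  obtain ⟨K, hK⟩ := exists_big p hp c hc d hd n
  obtain ⟨f, hf⟩ := inj_aux d hpos hmono hK
  exact Finite.of_injective f hf

lemma genCoeff_le_prod (d : ℕ → ℕ) (hpos : ∀ i, 1 ≤ d i) (hmono : Monotone d) {n K : ℕ}
    (hK : n < d K) :
    genCoeff d n ≤ ∏ i ∈ Finset.range K, (n / d i + 1) := by
  obtain ⟨f, hf⟩ := inj_aux d hpos hmono hK
  calc genCoeff d n ≤ Nat.card (∀ i : Fin K, Fin (n / d i + 1)) :=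
        Nat.card_le_card_of_injective f hf
    _ = ∏ i ∈ Finset.range K, (n / d i + 1) := by
        rw [Nat.card_eq_fintype_card, Fintype.card_pi]
        simp only [Fintype.card_fin]
        exact Fin.prod_univ_eq_prod_range (fun i => n / d i + 1) K

lemma logsq_le {δ : ℝ} (hδ : 0 < δ) : ∃ N : ℕ, ∀ n : ℕ, N ≤ n → (Real.log n)^2 ≤ δ * n := by
  refine ⟨⌈(16/δ)^2⌉₊ + 1, fun n hn => ?_⟩
  have hn1 : 1 ≤ (n:ℝ) := by
    have : 1 ≤ n := le_trans (Nat.le_add_left 1 _) hn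
    exact_mod_cast this
  set x := (n:ℝ) with hx
  have hx0 : 0 < x := lt_of_lt_of_le one_pos hn1
  have hsx : 1 ≤ Real.sqrt x := by
    rw [show (1:ℝ) = Real.sqrt 1 by simp]
    exact Real.sqrt_le_sqrt hn1
  have hs : 1 ≤ Real.sqrt (Real.sqrt x) := by
    rw [show (1:ℝ) = Real.sqrt 1 by simp]
    exact Real.sqrt_le_sqrt hsx
  set s := Real.sqrt (Real.sqrt x) with hsdef
  have hlog : Real.log x = 4 * Real.log s := by
    rw [hsdef, Real.log_sqrt (Real.sqrt_nonneg x), Real.log_sqrt hx0.le]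
    ring
  have hls : 0 ≤ Real.log s := Real.log_nonneg hs
  have hls2 : Real.log s ≤ s := by
    have := Real.log_le_sub_one_of_pos (lt_of_lt_of_le one_pos hs)
    linarith
  have hsq : s^2 = Real.sqrt x := Real.sq_sqrt (Real.sqrt_nonneg x)
  have h1 : (Real.log x)^2 ≤ 16 * Real.sqrt x := by
    rw [hlog]
    calc (4 * Real.log s)^2 = 16 * (Real.log s)^2 := by ring
    _ ≤ 16 * s^2 := by nlinarith
    _ = 16 * Real.sqrt x := by rw [hsq]
  have h2 : 16 / δ ≤ Real.sqrt x := by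
    have hxge : (16/δ)^2 ≤ x := by
      have h1' : (⌈(16/δ)^2⌉₊ : ℝ) ≤ x := by
        have h'' : (⌈(16/δ)^2⌉₊ : ℕ) ≤ n := le_trans (Nat.le_succ _) hn
        rw [hx]; exact_mod_cast h''
      exact le_trans (Nat.le_ceil _) h1'
    calc 16/δ = Real.sqrt ((16/δ)^2) := (Real.sqrt_sq (by positivity)).symm
    _ ≤ Real.sqrt x := Real.sqrt_le_sqrt hxge
  have h3 : 16 * Real.sqrt x ≤ δ * x := by
    have hxeq : x = Real.sqrt x * Real.sqrt x := (Real.mul_self_sqrt hx0.le).symm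
    have h2' : 16 ≤ δ * Real.sqrt x := by
      rw [div_le_iff₀ hδ] at h2; linarith
    have h4 := mul_le_mul_of_nonneg_right h2' (Real.sqrt_nonneg x)
    calc 16 * Real.sqrt x ≤ δ * (Real.sqrt x * Real.sqrt x) := by linarith [h4]
    _ = δ * x := by rw [← hxeq]
  linarith

lemma gauss (K : ℕ) : 2 * (∑ i ∈ Finset.range K, (i+1)) = K * (K+1) := by
  induction K with
  | zero => simp
  | succ k ih => rw [Finset.sum_range_succ, Nat.mul_add, ih]; ring

lemma pow_eq_exp (y : ℝ) (hy : 0 < y) (k : ℕ) : y ^ k = Real.exp (k * Real.log y) := by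
  rw [← Real.log_pow, Real.exp_log (pow_pos hy k)]

lemma expo_aux (lp β lc ln L x k : ℝ) (hlp : 0 < lp) (hβ : 0 ≤ β) (hlc : 0 ≤ lc)
    (hln : 0 ≤ ln) (hLsum : L = lc + ln) (hx : x = L / lp)
    (hk1 : x ≤ k) (hk2 : k ≤ x + 1) :
    k * (β + L) - (k*((k:ℝ)+1)/2) * lp
      ≤ ln^2/(2*lp) + (lc/lp + β/lp + 1) * ln + (lc^2/(2*lp) + (β/lp + 1)*lc + β) := by
  have hlpne : lp ≠ 0 := ne_of_gt hlp
  have hL : 0 ≤ L := by rw [hLsum]; linarith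
  have hx0 : 0 ≤ x := by rw [hx]; positivity
  have hxlp : x * lp = L := by rw [hx]; field_simp
  have hln' : ln = x * lp - lc := by rw [hxlp, hLsum]; ring
  have key : ln^2/(2*lp) + (lc/lp + β/lp + 1) * ln + (lc^2/(2*lp) + (β/lp + 1)*lc + β)
      = x^2*lp/2 + β*x + (x*lp) + β := by
    rw [hln']
    field_simp
    ring
  rw [key, hLsum, hln']
  nlinarith [mul_nonneg hβ (by linarith : (0:ℝ) ≤ x + 1 - k),
    mul_nonneg hlp.le (sq_nonneg (k - x)),
    mul_nonneg hlp.le (by linarith : (0:ℝ) ≤ k),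
    mul_nonneg hlp.le hx0]

lemma main_bound (p : ℕ) (hp : p.Prime) (c : ℝ) (hc : 1 ≤ c) (d : ℕ → ℕ)
    (hpos : ∀ i, 1 ≤ d i) (hmono : Monotone d)
    (hd : ∀ i : ℕ, ((p : ℝ) ^ (i + 1)) / c ≤ (d i : ℝ)) :
    ∃ A B : ℝ, ∀ n : ℕ, 2 ≤ n →
      (genCoeff d n : ℝ) ≤
        Real.exp ((Real.log n)^2 / (2 * Real.log p) + A * Real.log n + B) := by
  have hp2 : (2:ℝ) ≤ p := by exact_mod_cast hp.two_le
  have hp1 : (1:ℝ) < p := by linarith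
  have hp0 : (0:ℝ) < p := by linarith
  have hlp : 0 < Real.log p := Real.log_pos hp1
  have hc0 : (0:ℝ) < c := by linarith
  have hβ : 0 ≤ Real.log (1 + p) := Real.log_nonneg (by linarith)
  have hlc : 0 ≤ Real.log c := Real.log_nonneg hc
  set lp := Real.log p with hlp_def
  set β := Real.log (1 + (p:ℝ)) with hβ_def
  set lc := Real.log c with hlc_def
  refine ⟨lc/lp + β/lp + 1, lc^2/(2*lp) + (β/lp + 1) * lc + β, fun n hn => ?_⟩
  have hn1 : (1:ℝ) ≤ n := by
    have : (1:ℕ) ≤ n := by omega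
    exact_mod_cast this
  have hn0 : (0:ℝ) < n := by linarith
  set ln := Real.log n with hln_def
  have hln : 0 ≤ ln := Real.log_nonneg hn1
  set L := Real.log (c * n) with hL_def
  have hLsum : L = lc + ln := Real.log_mul (ne_of_gt hc0) (ne_of_gt hn0)
  have hL : 0 ≤ L := by rw [hLsum]; linarith
  set K := ⌊L / lp⌋₊ + 1 with hK_def
  have hxK : L / lp < (K:ℝ) := by
    have h := Nat.lt_floor_add_one (L / lp)
    rw [hK_def]; push_cast; linarith
  have hKx : (K:ℝ) ≤ L / lp + 1 := by
    have h := Nat.floor_le (by positivity : (0:ℝ) ≤ L / lp)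
    rw [hK_def]; push_cast; linarith
  -- c * n < p ^ K
  have hpK : c * (n:ℝ) < (p:ℝ)^K := by
    have h1 : L < K * lp := by
      have h2 : L = (L / lp) * lp := by field_simp
      rw [h2]
      exact mul_lt_mul_of_pos_right hxK hlp
    calc c * (n:ℝ) = Real.exp L := (Real.exp_log (by positivity)).symm
    _ < Real.exp (K * lp) := Real.exp_lt_exp.2 h1
    _ = (p:ℝ)^K := by rw [pow_eq_exp _ hp0 K, ← hlp_def]
  -- n < d K
  have hdK : n < d K := by
    have h1 : (p:ℝ)^K ≤ (p:ℝ)^(K+1) := pow_le_pow_right₀ (le_of_lt hp1) (Nat.le_succ K)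
    have h2 : (p:ℝ)^(K+1) ≤ (d K) * c := (div_le_iff₀ hc0).1 (hd K)
    have h3 : (n:ℝ) < d K := by nlinarith
    exact_mod_cast h3
  -- factor bound
  have hfac : ∀ i ∈ Finset.range K,
      ((n / d i : ℕ) : ℝ) + 1 ≤ (1+(p:ℝ)) * (c*n) / (p:ℝ)^(i+1) := by
    intro i hi
    have hi' : i < K := Finset.mem_range.1 hi
    have hdi : (0:ℝ) < d i := by exact_mod_cast hpos i
    have hppos : (0:ℝ) < (p:ℝ)^(i+1) := by positivity
    have h1 : ((n / d i : ℕ) : ℝ) ≤ (n:ℝ) / d i := Nat.cast_div_le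
    have hdic : (p:ℝ)^(i+1) ≤ (d i) * c := (div_le_iff₀ hc0).1 (hd i)
    have h2 : (n:ℝ) / d i ≤ c * n / (p:ℝ)^(i+1) := by
      rw [div_le_div_iff₀ hdi hppos]
      nlinarith
    have h3 : (p:ℝ)^i ≤ c * n := by
      have hile : (i:ℝ) ≤ L / lp := by
        have hle : (i:ℝ) ≤ (⌊L/lp⌋₊ : ℝ) := by
          have : i ≤ ⌊L/lp⌋₊ := by omega
          exact_mod_cast this
        exact hle.trans (Nat.floor_le (by positivity))
      have h4 : (i:ℝ) * lp ≤ L := by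
        rw [← le_div_iff₀ hlp]; exact hile
      calc (p:ℝ)^i = Real.exp (i * lp) := by rw [pow_eq_exp _ hp0 i, ← hlp_def]
      _ ≤ Real.exp L := Real.exp_le_exp.2 h4
      _ = c*n := Real.exp_log (by positivity)
    have h5 : (1:ℝ) ≤ (p:ℝ) * (c*n) / (p:ℝ)^(i+1) := by
      rw [le_div_iff₀ hppos]
      have hps : (p:ℝ)^(i+1) = (p:ℝ)^i * p := pow_succ (p:ℝ) i
      nlinarith
    have h12 : ((n / d i : ℕ) : ℝ) ≤ c * n / (p:ℝ)^(i+1) := h1.trans h2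
    have heq : c*n/(p:ℝ)^(i+1) + (p:ℝ) * (c*n)/(p:ℝ)^(i+1) = (1+(p:ℝ))*(c*n)/(p:ℝ)^(i+1) := by
      ring
    linarith
  -- product bound
  have hprod : (genCoeff d n : ℝ) ≤ ∏ i ∈ Finset.range K, ((1+(p:ℝ))*(c*n)/(p:ℝ)^(i+1)) := by
    have h1 := genCoeff_le_prod d hpos hmono hdK
    calc (genCoeff d n : ℝ) ≤ ((∏ i ∈ Finset.range K, (n / d i + 1) : ℕ) : ℝ) := by
          exact_mod_cast h1
    _ = ∏ i ∈ Finset.range K, (((n / d i : ℕ):ℝ) + 1) := by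
          rw [Nat.cast_prod]
          exact Finset.prod_congr rfl fun i _ => by push_cast; ring
    _ ≤ ∏ i ∈ Finset.range K, ((1+(p:ℝ))*(c*n)/(p:ℝ)^(i+1)) :=
        Finset.prod_le_prod (fun i _ => by positivity) hfac
  set S := ∑ i ∈ Finset.range K, (i+1) with hS_def
  have hprodeq : ∏ i ∈ Finset.range K, ((1+(p:ℝ))*(c*n)/(p:ℝ)^(i+1))
      = ((1+(p:ℝ))*(c*n))^K / (p:ℝ)^S := by
    rw [Finset.prod_div_distrib, Finset.prod_const, Finset.card_range,
        Finset.prod_pow_eq_pow_sum]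
  have hSval : (S:ℝ) = K*((K:ℝ)+1)/2 := by
    have h2 : 2 * S = K * (K+1) := gauss K
    have h3 : (2:ℝ) * S = K * ((K:ℝ)+1) := by exact_mod_cast h2
    linarith
  have ha : (0:ℝ) < (1+(p:ℝ))*(c*n) := by positivity
  have hexp1 : ((1+(p:ℝ))*(c*n))^K / (p:ℝ)^S
      = Real.exp ((K:ℝ) * (β + L) - (S:ℝ) * lp) := by
    have hloga : Real.log ((1+(p:ℝ))*(c*n)) = β + L := by
      rw [Real.log_mul (by positivity) (by positivity)]
    rw [pow_eq_exp _ ha K, pow_eq_exp _ hp0 S, ← Real.exp_sub, hloga, ← hlp_def]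
  have hexpo : (K:ℝ) * (β + L) - (S:ℝ) * lp
      ≤ ln^2/(2*lp) + (lc/lp + β/lp + 1) * ln + (lc^2/(2*lp) + (β/lp + 1)*lc + β) := by
    rw [hSval]
    exact expo_aux lp β lc ln L (L/lp) (K:ℝ) hlp hβ hlc hln hLsum rfl (le_of_lt hxK) hKx
  calc (genCoeff d n : ℝ)
      ≤ ∏ i ∈ Finset.range K, ((1+(p:ℝ))*(c*n)/(p:ℝ)^(i+1)) := hprod
    _ = Real.exp ((K:ℝ) * (β + L) - (S:ℝ) * lp) := by rw [hprodeq, hexp1]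
    _ ≤ Real.exp (ln^2/(2*lp) + (lc/lp + β/lp + 1) * ln
          + (lc^2/(2*lp) + (β/lp + 1)*lc + β)) := Real.exp_le_exp.2 hexpo

/-- If `d₁ ≤ d₂ ≤ ⋯` are positive with `dᵢ ≥ p^i / c`, then the generating series
`F(t) = ∑ aₙ tⁿ` has radius of convergence `1`, and for every `ε > 0` the coefficients
eventually satisfy `aₙ ≤ exp((1/(2 log p) + ε)(log n)^2)`. -/
theorem stmt18 (p : ℕ) (hp : p.Prime) (c : ℝ) (hc : 1 ≤ c) (d : ℕ → ℕ)
    (hpos : ∀ i, 1 ≤ d i) (hmono : Monotone d)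
    (hd : ∀ i : ℕ, ((p : ℝ) ^ (i + 1)) / c ≤ (d i : ℝ)) :
    (∀ r : ℝ, 0 ≤ r → (Summable (fun n => (genCoeff d n : ℝ) * r ^ n) ↔ r < 1)) ∧
    (∀ ε : ℝ, 0 < ε → ∃ N : ℕ, ∀ n : ℕ, N ≤ n →
      (genCoeff d n : ℝ) ≤ Real.exp ((1 / (2 * Real.log p) + ε) * (Real.log n) ^ 2)) := by
  obtain ⟨A, B, hAB⟩ := main_bound p hp c hc d hpos hmono hd
  have hp1 : (1:ℝ) < p := by
    have : (2:ℝ) ≤ p := by exact_mod_cast hp.two_le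
    linarith
  have hlp : 0 < Real.log p := Real.log_pos hp1
  have part2 : ∀ ε : ℝ, 0 < ε → ∃ N : ℕ, ∀ n : ℕ, N ≤ n →
      (genCoeff d n : ℝ) ≤ Real.exp ((1 / (2 * Real.log p) + ε) * (Real.log n) ^ 2) := by
    intro ε hε
    set T := max 1 ((|A| + |B|)/ε) with hT
    refine ⟨max 2 (⌈Real.exp T⌉₊ + 1), fun n hn => ?_⟩
    have hn2 : 2 ≤ n := le_trans (le_max_left _ _) hn
    have hnT : Real.exp T ≤ n := by
      have h1 : (⌈Real.exp T⌉₊ + 1 : ℕ) ≤ n := le_trans (le_max_right _ _) hn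
      have h2 : ((⌈Real.exp T⌉₊ : ℕ) : ℝ) ≤ n := by exact_mod_cast Nat.le_of_succ_le h1
      exact le_trans (Nat.le_ceil _) h2
    have hlnT : T ≤ Real.log n := by
      have h := Real.log_le_log (Real.exp_pos T) hnT
      rwa [Real.log_exp] at h
    have hT1 : 1 ≤ T := le_max_left _ _
    have hln1 : 1 ≤ Real.log n := le_trans hT1 hlnT
    have hTA : (|A| + |B|)/ε ≤ T := le_max_right _ _
    have h1 : |A| + |B| ≤ ε * T := by
      rw [div_le_iff₀ hε] at hTA; linarith
    have key : A * Real.log n + B ≤ ε * (Real.log n)^2 := by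
      nlinarith [abs_nonneg A, abs_nonneg B, le_abs_self A, le_abs_self B, hε, hlnT, hln1, h1,
        mul_le_mul_of_nonneg_right hlnT (by linarith : (0:ℝ) ≤ Real.log n)]
    calc (genCoeff d n : ℝ)
        ≤ Real.exp ((Real.log n)^2/(2*Real.log p) + A*Real.log n + B) := hAB n hn2
      _ ≤ Real.exp ((1/(2*Real.log p) + ε) * (Real.log n)^2) := by
          apply Real.exp_le_exp.2
          have heq : (Real.log n)^2/(2*Real.log p) = 1/(2*Real.log p) * (Real.log n)^2 := by
            ring
          nlinarith [key, heq]
  refine ⟨?_, part2⟩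
  intro r hr
  constructor
  · -- summable → r < 1
    intro hs
    by_contra hr1
    push_neg at hr1
    have hone : ∀ k : ℕ, (1:ℝ) ≤ (genCoeff d (k * d 0) : ℝ) * r ^ (k * d 0) := by
      intro k
      haveI hfin : Finite {a : ℕ →₀ ℕ // (a.sum fun i m => m * d i) = k * d 0} :=
        sol_finite p hp c hc d hpos hmono hd _
      haveI hne : Nonempty {a : ℕ →₀ ℕ // (a.sum fun i m => m * d i) = k * d 0} :=
        ⟨⟨Finsupp.single 0 k, by
          rw [Finsupp.sum_single_index]; simp⟩⟩
      have h1 : 1 ≤ genCoeff d (k * d 0) := Nat.one_le_iff_ne_zero.2 (Nat.card_pos).ne'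
      have h1' : (1:ℝ) ≤ (genCoeff d (k * d 0) : ℝ) := by exact_mod_cast h1
      have h2 : (1:ℝ) ≤ r ^ (k * d 0) := one_le_pow₀ hr1
      nlinarith
    have h0 := hs.tendsto_atTop_zero
    have hmono' : StrictMono (fun k : ℕ => k * d 0) := fun a b h => by
      exact Nat.mul_lt_mul_of_lt_of_le h (le_refl (d 0)) (hpos 0)
    have h3 : Filter.Tendsto (fun k : ℕ => (genCoeff d (k * d 0) : ℝ) * r ^ (k * d 0))
        Filter.atTop (nhds 0) := h0.comp hmono'.tendsto_atTop
    have h4 := h3.eventually_lt_const (by norm_num : (0:ℝ) < 1)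
    obtain ⟨k, hk⟩ := h4.exists
    exact absurd (hone k) (not_le.2 hk)
  · -- r < 1 → summable
    intro hrlt
    rcases eq_or_lt_of_le hr with h0 | h0
    · apply summable_of_ne_finset_zero (s := ({0} : Finset ℕ))
      intro n hn
      have hn0 : n ≠ 0 := by simpa using hn
      simp [← h0, zero_pow hn0]
    · set r' := (1+r)/2 with hr'
      have hr'0 : 0 < r' := by rw [hr']; linarith
      have hr'1 : r' < 1 := by rw [hr']; linarith
      have hrr' : r < r' := by rw [hr']; linarith
      have hq : 1 < r'/r := (one_lt_div h0).2 hrr'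
      have hlq : 0 < Real.log (r'/r) := Real.log_pos hq
      have hC : 0 < 1/(2*Real.log p) + 1 := by positivity
      obtain ⟨N₁, hN₁⟩ := part2 1 one_pos
      obtain ⟨N₂, hN₂⟩ := logsq_le (div_pos hlq hC)
      have hbound : ∀ n, max N₁ N₂ ≤ n → (genCoeff d n : ℝ) * r^n ≤ r'^n := by
        intro n hn
        have h1 := hN₁ n (le_trans (le_max_left _ _) hn)
        have h2 := hN₂ n (le_trans (le_max_right _ _) hn)
        have h3 : (1/(2*Real.log p) + 1) * (Real.log n)^2 ≤ n * Real.log (r'/r) := by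
          have h3' := mul_le_mul_of_nonneg_left h2 hC.le
          calc (1/(2*Real.log p) + 1) * (Real.log n)^2
              ≤ (1/(2*Real.log p) + 1) * (Real.log (r'/r)/(1/(2*Real.log p) + 1) * n) := h3'
            _ = n * Real.log (r'/r) := by field_simp
        have h4 : Real.exp ((1/(2*Real.log p) + 1) * (Real.log n)^2) ≤ (r'/r)^n := by
          calc Real.exp ((1/(2*Real.log p) + 1) * (Real.log n)^2)
              ≤ Real.exp (n * Real.log (r'/r)) := Real.exp_le_exp.2 h3
            _ = (r'/r)^n := (pow_eq_exp _ (div_pos hr'0 h0) n).symm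
        calc (genCoeff d n : ℝ) * r^n ≤ (r'/r)^n * r^n :=
              mul_le_mul_of_nonneg_right (h1.trans h4) (pow_nonneg h0.le n)
          _ = r'^n := by
              rw [← mul_pow]
              congr 1
              field_simp
      have hg : Summable (fun n : ℕ => r'^n) := summable_geometric_of_lt_one hr'0.le hr'1
      rw [← summable_nat_add_iff (max N₁ N₂)]
      apply Summable.of_nonneg_of_le (fun k => by positivity)
        (fun k => hbound (k + max N₁ N₂) (Nat.le_add_left _ _))
        ((summable_nat_add_iff (max N₁ N₂)).2 hg)
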